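/- arXiv:1505.00872 — 7 statements merged into one kernel-verified Lean document; each statement's English description precedes it below -/
import Mathlib

section
/- Subcritical invariance: let R = β · Σ_{i=0}^{τ-1} (1 − α·ω(i)) and suppose R ≤ 1. If x : ℤ → ℝ satisfies the epidemic recursion from time 0 and there is a real M ≥ 0 with 0 ≤ x(t) ≤ M for every integer t ≤ 0, then 0 ≤ x(t) ≤ M for every integer t. -/
/-- Subcritical invariance: if `R ≤ 1` and the history lies in `[0, M]`,
then the whole solution lies in `[0, M]`. -/
theorem epidemic_recursion_subcritical_invariance
    (d τ : ℕ) (hτ : 1 ≤ τ) (β α : ℝ) (hβ : 0 < β)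
    (hα0 : 0 ≤ α) (hα1 : α ≤ 1)
    (ω : ℕ → ℝ) (hω : ∀ i, 0 ≤ ω i ∧ ω i ≤ 1)
    (R : ℝ) (hR : R = β * ∑ i ∈ Finset.range τ, (1 - α * ω i)) (hR1 : R ≤ 1)
    (x : ℤ → ℝ)
    (hx : ∀ t : ℤ, 0 ≤ t →
      x (t + 1) = β * ∑ i ∈ Finset.range τ, (1 - α * ω i) * x (t - d - i))
    (M : ℝ) (hM : 0 ≤ M)
    (h0 : ∀ t : ℤ, t ≤ 0 → 0 ≤ x t ∧ x t ≤ M) :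
    ∀ t : ℤ, 0 ≤ x t ∧ x t ≤ M := by
  have key : ∀ n : ℕ, ∀ t : ℤ, t ≤ n → 0 ≤ x t ∧ x t ≤ M := by
    intro n
    induction n with
    | zero => intro t ht; exact h0 t (by exact_mod_cast ht)
    | succ n ih =>
      intro t ht
      rcases le_or_gt t n with h | h
      · exact ih t h
      · have ht' : t = (n : ℤ) + 1 := le_antisymm (by exact_mod_cast ht) h
        subst ht'
        rw [hx n (by positivity)]
        have hcoef : ∀ i ∈ Finset.range τ, 0 ≤ 1 - α * ω i ∧ 1 - α * ω i ≤ 1 := by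
          intro i _
          constructor
          · nlinarith [(hω i).1, (hω i).2]
          · nlinarith [(hω i).1, (hω i).2]
        have hxb : ∀ i ∈ Finset.range τ,
            0 ≤ x ((n : ℤ) - d - i) ∧ x ((n : ℤ) - d - i) ≤ M := by
          intro i _
          exact ih _ (by push_cast; linarith [Int.ofNat_nonneg d, Int.ofNat_nonneg i])
        constructor
        · apply mul_nonneg hβ.le
          apply Finset.sum_nonneg
          intro i hi
          exact mul_nonneg (hcoef i hi).1 (hxb i hi).1
        · have hsum : (∑ i ∈ Finset.range τ, (1 - α * ω i) * x ((n:ℤ) - d - i)) ≤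
              ∑ i ∈ Finset.range τ, (1 - α * ω i) * M := by
            apply Finset.sum_le_sum
            intro i hi
            exact mul_le_mul_of_nonneg_left (hxb i hi).2 (hcoef i hi).1
          calc β * ∑ i ∈ Finset.range τ, (1 - α * ω i) * x ((n:ℤ) - d - i)
              ≤ β * ∑ i ∈ Finset.range τ, (1 - α * ω i) * M :=
                mul_le_mul_of_nonneg_left hsum hβ.le
            _ = R * M := by rw [hR, ← Finset.sum_mul]; ring
            _ ≤ 1 * M := by
                apply mul_le_mul_of_nonneg_right hR1 hM
            _ = M := one_mul M
  intro t
  rcases le_or_gt t 0 with h | h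
  · exact h0 t h
  · exact key t.toNat t (by simp)
end

section
/- Geometric decay in the subcritical case: let R = β · Σ_{i=0}^{τ-1} (1 − α·ω(i)) and suppose R < 1. If x : ℤ → ℝ satisfies the epidemic recursion from time 0 and there is a real M ≥ 0 with 0 ≤ x(t) ≤ M for every integer t ≤ 0, then for every natural number k and every integer t with t > k·(d + τ), one has x(t) ≤ R^k · M. -/
/-- Geometric decay in the subcritical case. -/
theorem epidemic_recursion_geometric_decay
    (d τ : ℕ) (hτ : 1 ≤ τ) (β α : ℝ) (hβ : 0 < β)
    (hα0 : 0 ≤ α) (hα1 : α ≤ 1)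
    (ω : ℕ → ℝ) (hω : ∀ i, 0 ≤ ω i ∧ ω i ≤ 1)
    (R : ℝ) (hR : R = β * ∑ i ∈ Finset.range τ, (1 - α * ω i)) (hR1 : R < 1)
    (x : ℤ → ℝ)
    (hx : ∀ t : ℤ, 0 ≤ t →
      x (t + 1) = β * ∑ i ∈ Finset.range τ, (1 - α * ω i) * x (t - d - i))
    (M : ℝ) (hM : 0 ≤ M)
    (h0 : ∀ t : ℤ, t ≤ 0 → 0 ≤ x t ∧ x t ≤ M) :
    ∀ k : ℕ, ∀ t : ℤ, (↑(k * (d + τ)) : ℤ) < t → x t ≤ R ^ k * M := by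
  have hc : ∀ i : ℕ, 0 ≤ 1 - α * ω i := by
    intro i
    have h1 : α * ω i ≤ 1 := by
      calc α * ω i ≤ 1 * 1 := by
            apply mul_le_mul hα1 (hω i).2 (hω i).1 zero_le_one
        _ = 1 := by ring
    linarith
  have hR0 : 0 ≤ R := by
    rw [hR]
    apply mul_nonneg hβ.le
    exact Finset.sum_nonneg fun i _ => hc i
  -- key bound
  have key : ∀ (t : ℤ), 0 ≤ t → ∀ C : ℝ, 0 ≤ C →
      (∀ i ∈ Finset.range τ, x (t - d - i) ≤ C) → x (t + 1) ≤ R * C := by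
    intro t ht C hC h
    rw [hx t ht, hR]
    have : ∑ i ∈ Finset.range τ, (1 - α * ω i) * x (t - d - i)
        ≤ ∑ i ∈ Finset.range τ, (1 - α * ω i) * C := by
      apply Finset.sum_le_sum
      intro i hi
      exact mul_le_mul_of_nonneg_left (h i hi) (hc i)
    calc β * ∑ i ∈ Finset.range τ, (1 - α * ω i) * x (t - d - i)
        ≤ β * ∑ i ∈ Finset.range τ, (1 - α * ω i) * C :=
          mul_le_mul_of_nonneg_left this hβ.le
      _ = β * (∑ i ∈ Finset.range τ, (1 - α * ω i)) * C := by
          rw [← Finset.sum_mul]; ring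
  -- base : x t ≤ M for all t
  have base : ∀ n : ℕ, ∀ t : ℤ, t ≤ n → x t ≤ M := by
    intro n
    induction n with
    | zero => intro t ht; exact (h0 t (by exact_mod_cast ht)).2
    | succ n ih =>
      intro t ht
      rcases le_or_gt t n with h | h
      · exact ih t h
      · have hteq : t = (n : ℤ) + 1 := by omega
        have hb : x ((n : ℤ) + 1) ≤ R * M := by
          apply key n (by positivity) M hM
          intro i _
          exact ih _ (by omega)
        rw [hteq]
        calc x ((n : ℤ) + 1) ≤ R * M := hb
          _ ≤ 1 * M := mul_le_mul_of_nonneg_right hR1.le hM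
          _ = M := by ring
    -- main induction
  intro k
  induction k with
  | zero =>
    intro t ht
    simp only [pow_zero, one_mul]
    rcases le_or_gt t 0 with h | h
    · exact (h0 t h).2
    · obtain ⟨n, rfl⟩ := Int.eq_ofNat_of_zero_le h.le
      exact base n _ le_rfl
  | succ k ih =>
    intro t ht
    have hm : ((k + 1) * (d + τ) : ℕ) = (k * (d + τ) + (d + τ) : ℕ) := by ring
    have ht' : (↑(k * (d + τ)) : ℤ) + d + τ < t := by
      rw [hm] at ht; push_cast at ht ⊢; linarith
    have ht1 : (0 : ℤ) ≤ t - 1 := by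
      have : (0:ℤ) ≤ (↑(k * (d + τ)) : ℤ) := by positivity
      omega
    have hb : x ((t - 1) + 1) ≤ R * (R ^ k * M) := by
      apply key (t - 1) ht1 (R ^ k * M) (by positivity)
      intro i hi
      apply ih
      have hiτ : i < τ := Finset.mem_range.mp hi
      omega
    have : (t - 1) + 1 = t := by ring
    rw [this] at hb
    calc x t ≤ R * (R ^ k * M) := hb
      _ = R ^ (k + 1) * M := by ring
end

section
/- Extinction in the subcritical case: let R = β · Σ_{i=0}^{τ-1} (1 − α·ω(i)) and suppose R < 1. If x : ℤ → ℝ satisfies the epidemic recursion from time 0 and there is a real M ≥ 0 with 0 ≤ x(t) ≤ M for every integer t ≤ 0, then x(t) tends to 0 as t → +∞. -/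
/-- Extinction in the subcritical case: if `R < 1` and the history is bounded in `[0, M]`,
then `x t → 0` as `t → +∞`. -/
theorem epidemic_recursion_extinction
    (d τ : ℕ) (hτ : 1 ≤ τ) (β α : ℝ) (hβ : 0 < β)
    (hα0 : 0 ≤ α) (hα1 : α ≤ 1)
    (ω : ℕ → ℝ) (hω : ∀ i, 0 ≤ ω i ∧ ω i ≤ 1)
    (R : ℝ) (hR : R = β * ∑ i ∈ Finset.range τ, (1 - α * ω i)) (hR1 : R < 1)
    (x : ℤ → ℝ)
    (hx : ∀ t : ℤ, 0 ≤ t →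
      x (t + 1) = β * ∑ i ∈ Finset.range τ, (1 - α * ω i) * x (t - d - i))
    (M : ℝ) (hM : 0 ≤ M)
    (h0 : ∀ t : ℤ, t ≤ 0 → 0 ≤ x t ∧ x t ≤ M) :
    Filter.Tendsto x Filter.atTop (nhds 0) := by
  have hc : ∀ i : ℕ, 0 ≤ 1 - α * ω i := by
    intro i
    have h1 : α * ω i ≤ 1 * 1 :=
      mul_le_mul hα1 (hω i).2 (hω i).1 zero_le_one
    linarith
  have hR0 : 0 ≤ R := by
    rw [hR]
    exact mul_nonneg hβ.le (Finset.sum_nonneg fun i _ => hc i)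
  -- Base bound: 0 ≤ x t ≤ M for all t
  have base : ∀ n : ℕ, ∀ t : ℤ, t ≤ (n : ℤ) → 0 ≤ x t ∧ x t ≤ M := by
    intro n
    induction n with
    | zero => intro t ht; exact h0 t (by exact_mod_cast ht)
    | succ n ih =>
      intro t ht
      rcases lt_or_ge t ((n : ℤ) + 1) with h | h
      · exact ih t (by omega)
      · have htn : t = (n : ℤ) + 1 := by push_cast at ht ⊢; omega
        have hrec := hx n (by positivity)
        rw [htn, hrec]
        constructor
        · apply mul_nonneg hβ.le
          apply Finset.sum_nonneg
          intro i _
          exact mul_nonneg (hc i) (ih _ (by omega)).1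
        · calc β * ∑ i ∈ Finset.range τ, (1 - α * ω i) * x ((n : ℤ) - d - i)
              ≤ β * ∑ i ∈ Finset.range τ, (1 - α * ω i) * M := by
                apply mul_le_mul_of_nonneg_left _ hβ.le
                apply Finset.sum_le_sum
                intro i _
                exact mul_le_mul_of_nonneg_left (ih _ (by omega)).2 (hc i)
          _ = R * M := by rw [hR, ← Finset.sum_mul]; ring
          _ ≤ 1 * M := mul_le_mul_of_nonneg_right hR1.le hM
          _ = M := one_mul M
  -- Geometric decay
  have decay : ∀ n : ℕ, ∀ t : ℤ, (n : ℤ) * (d + τ) ≤ t → x t ≤ M * R ^ n := by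
    intro n
    induction n with
    | zero =>
      intro t ht
      simpa using (base t.toNat t (by omega)).2
    | succ n ih =>
      intro t ht
      have hdt : (1 : ℤ) ≤ (d : ℤ) + τ := by
        have : (1 : ℤ) ≤ (τ : ℤ) := by exact_mod_cast hτ
        omega
      have ht1 : (1 : ℤ) ≤ t := by
        have : ((n : ℤ) + 1) * (d + τ) ≤ t := by push_cast at ht; linarith
        nlinarith [Int.natCast_nonneg n]
      have hrec := hx (t - 1) (by omega)
      have hteq : t - 1 + 1 = t := by ring
      rw [hteq] at hrec
      rw [hrec]
      calc β * ∑ i ∈ Finset.range τ, (1 - α * ω i) * x (t - 1 - d - i)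
          ≤ β * ∑ i ∈ Finset.range τ, (1 - α * ω i) * (M * R ^ n) := by
            apply mul_le_mul_of_nonneg_left _ hβ.le
            apply Finset.sum_le_sum
            intro i hi
            apply mul_le_mul_of_nonneg_left _ (hc i)
            apply ih
            have hi' : (i : ℤ) ≤ (τ : ℤ) - 1 := by
              have := Finset.mem_range.mp hi
              omega
            have : ((n : ℤ) + 1) * (d + τ) ≤ t := by push_cast at ht; linarith
            nlinarith
        _ = R * (M * R ^ n) := by rw [hR, ← Finset.sum_mul]; ring
        _ = M * R ^ (n + 1) := by ring
  -- Conclude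
  rw [Metric.tendsto_atTop]
  intro ε hε
  have htend : Filter.Tendsto (fun n : ℕ => M * R ^ n) Filter.atTop (nhds 0) := by
    have := tendsto_pow_atTop_nhds_zero_of_lt_one hR0 hR1
    simpa using this.const_mul M
  obtain ⟨n, hn⟩ := (Metric.tendsto_atTop.mp htend ε hε) 
  have hn' := hn n le_rfl
  rw [Real.dist_eq, sub_zero, abs_of_nonneg (mul_nonneg hM (pow_nonneg hR0 n))] at hn'
  refine ⟨(n : ℤ) * (d + τ), fun t ht => ?_⟩
  have h1 : x t ≤ M * R ^ n := decay n t ht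
  have h2 : 0 ≤ x t := (base t.toNat t (by omega)).1
  rw [Real.dist_eq, sub_zero, abs_of_nonneg h2]
  linarith
end

section
/- Geometric growth in the supercritical case: let R = β · Σ_{i=0}^{τ-1} (1 − α·ω(i)) and suppose R > 1. If x : ℤ → ℝ satisfies the epidemic recursion from time 0 and there is a real m > 0 with x(t) ≥ m for every integer t ≤ 0, then for every natural number k and every integer t with t > k·(d + τ), one has x(t) ≥ R^k · m; in particular x(t) → +∞ as t → +∞. -/
/-- Geometric growth in the supercritical case, and divergence to `+∞`. -/
theorem epidemic_recursion_geometric_growth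
    (d τ : ℕ) (hτ : 1 ≤ τ) (β α : ℝ) (hβ : 0 < β)
    (hα0 : 0 ≤ α) (hα1 : α ≤ 1)
    (ω : ℕ → ℝ) (hω : ∀ i, 0 ≤ ω i ∧ ω i ≤ 1)
    (R : ℝ) (hR : R = β * ∑ i ∈ Finset.range τ, (1 - α * ω i)) (hR1 : 1 < R)
    (x : ℤ → ℝ)
    (hx : ∀ t : ℤ, 0 ≤ t →
      x (t + 1) = β * ∑ i ∈ Finset.range τ, (1 - α * ω i) * x (t - d - i))
    (m : ℝ) (hm : 0 < m)
    (h0 : ∀ t : ℤ, t ≤ 0 → m ≤ x t) :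
    (∀ k : ℕ, ∀ t : ℤ, (↑(k * (d + τ)) : ℤ) < t → R ^ k * m ≤ x t) ∧
      Filter.Tendsto x Filter.atTop Filter.atTop := by
  have hcoef : ∀ i : ℕ, 0 ≤ 1 - α * ω i := by
    intro i
    have h1 : α * ω i ≤ 1 * 1 :=
      mul_le_mul hα1 (hω i).2 (hω i).1 zero_le_one
    linarith
  -- key step lemma
  have step : ∀ t : ℤ, 1 ≤ t → ∀ c : ℝ, 0 ≤ c →
      (∀ i : ℕ, i < τ → c ≤ x (t - 1 - (d : ℤ) - (i : ℤ))) → R * c ≤ x t := by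
    intro t ht c hc hci
    have h := hx (t - 1) (by omega)
    rw [show t - 1 + 1 = t by ring] at h
    have hsum : (∑ i ∈ Finset.range τ, (1 - α * ω i) * c) ≤
        ∑ i ∈ Finset.range τ, (1 - α * ω i) * x (t - 1 - (d : ℤ) - (i : ℤ)) := by
      apply Finset.sum_le_sum
      intro i hi
      exact mul_le_mul_of_nonneg_left (hci i (Finset.mem_range.mp hi)) (hcoef i)
    have hRc : R * c = β * ∑ i ∈ Finset.range τ, (1 - α * ω i) * c := by
      rw [hR, ← Finset.sum_mul]; ring
    rw [h, hRc]
    exact mul_le_mul_of_nonneg_left hsum hβ.le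
  -- x is bounded below by m everywhere
  have hA : ∀ n : ℕ, ∀ t : ℤ, t ≤ (n : ℤ) → m ≤ x t := by
    intro n
    induction n with
    | zero => intro t ht; exact h0 t (by exact_mod_cast ht)
    | succ n ih =>
      intro t ht
      rcases le_or_gt t n with h | h
      · exact ih t h
      · have ht1 : 1 ≤ t := by omega
        have := step t ht1 m hm.le (fun i hi => ih _ (by omega))
        nlinarith
  have hA' : ∀ t : ℤ, m ≤ x t := fun t => hA t.toNat t (Int.self_le_toNat t)
  -- geometric growth
  have hB : ∀ k : ℕ, ∀ t : ℤ, (↑(k * (d + τ)) : ℤ) < t → R ^ k * m ≤ x t := by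
    intro k
    induction k with
    | zero => intro t _; simpa using hA' t
    | succ k ih =>
      intro t ht
      have ht' : ((k + 1) * (d + τ) : ℤ) < t := by push_cast at ht ⊢; linarith
      have ht1 : 1 ≤ t := by
        have : (0 : ℤ) ≤ (k + 1) * (d + τ) := by positivity
        omega
      have hRk : (0 : ℝ) ≤ R ^ k * m := by positivity
      have hstep := step t ht1 (R ^ k * m) hRk (fun i hi => by
        apply ih
        have : ((k : ℤ) * (d + τ)) < t - 1 - d - i := by push_cast; nlinarith [Int.ofNat_lt.mpr hi]
        push_cast
        linarith)
      calc R ^ (k + 1) * m = R * (R ^ k * m) := by ring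
        _ ≤ x t := hstep
  refine ⟨hB, ?_⟩
  rw [Filter.tendsto_atTop]
  intro b
  obtain ⟨k, hk⟩ := pow_unbounded_of_one_lt (b / m) hR1
  have hbk : b ≤ R ^ k * m := by
    have := mul_lt_mul_of_pos_right hk hm
    rw [div_mul_cancel₀ b hm.ne'] at this
    linarith
  filter_upwards [Filter.eventually_gt_atTop (↑(k * (d + τ)) : ℤ)] with t ht
  exact hbk.trans (hB k t ht)
end

section
/- Threshold characterization of the characteristic root: let R = β · Σ_{i=0}^{τ-1} (1 − α·ω(i)) and suppose R > 0. Define f : (0, ∞) → ℝ by f(r) = β · Σ_{i=0}^{τ-1} (1 − α·ω(i)) · r^{−(d+1+i)}. Then f is strictly decreasing on (0, ∞) and there exists a unique r* > 0 with f(r*) = 1; moreover r* > 1 if and only if R > 1, r* = 1 if and only if R = 1, and r* < 1 if and only if R < 1. -/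
/-- Threshold characterization of the characteristic root: the characteristic function
`f r = β * ∑_{i<τ} (1 - α ω i) r^{-(d+1+i)}` is strictly decreasing on `(0, ∞)`,
has a unique root `r* > 0` of `f r* = 1`, and `r*` compares to `1` exactly as `R`
compares to `1`. -/
theorem characteristic_root_threshold
    (d τ : ℕ) (hτ : 1 ≤ τ) (β α : ℝ) (hβ : 0 < β)
    (hα0 : 0 ≤ α) (hα1 : α ≤ 1)
    (ω : ℕ → ℝ) (hω : ∀ i, 0 ≤ ω i ∧ ω i ≤ 1)
    (R : ℝ) (hR : R = β * ∑ i ∈ Finset.range τ, (1 - α * ω i)) (hRpos : 0 < R)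
    (f : ℝ → ℝ)
    (hf : ∀ r : ℝ,
      f r = β * ∑ i ∈ Finset.range τ, (1 - α * ω i) * r ^ (-((d : ℤ) + 1 + (i : ℤ)))) :
    StrictAntiOn f (Set.Ioi (0 : ℝ)) ∧
      (∃! r : ℝ, 0 < r ∧ f r = 1) ∧
      (∀ r : ℝ, 0 < r → f r = 1 →
        ((1 < r ↔ 1 < R) ∧ (r = 1 ↔ R = 1) ∧ (r < 1 ↔ R < 1))) := by
  set c : ℕ → ℝ := fun i => 1 - α * ω i with hc
  have hc0 : ∀ i, 0 ≤ c i := by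
    intro i
    have h1 : α * ω i ≤ 1 * 1 := mul_le_mul hα1 (hω i).2 (hω i).1 zero_le_one
    simp only [hc]; linarith
  -- rewrite f via natural powers
  have hzp : ∀ (r : ℝ) (i : ℕ), r ^ (-((d : ℤ) + 1 + (i : ℤ))) = (r ^ (d + 1 + i))⁻¹ := by
    intro r i
    have : -((d : ℤ) + 1 + (i : ℤ)) = -((d + 1 + i : ℕ) : ℤ) := by push_cast; ring
    rw [this, zpow_neg, zpow_natCast]
  have hf' : ∀ r : ℝ, f r = β * ∑ i ∈ Finset.range τ, c i * (r ^ (d + 1 + i))⁻¹ := by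
    intro r; rw [hf]; congr 1; apply Finset.sum_congr rfl; intro i _; rw [hzp]
  have hf1 : f 1 = R := by
    rw [hf', hR]; congr 1; apply Finset.sum_congr rfl; intro i _; simp
  have hS : 0 < ∑ i ∈ Finset.range τ, c i := by
    by_contra h
    push_neg at h
    have : β * ∑ i ∈ Finset.range τ, c i ≤ 0 := mul_nonpos_of_nonneg_of_nonpos hβ.le h
    rw [← hR] at this; linarith
  obtain ⟨j, hjmem, hjpos⟩ : ∃ j ∈ Finset.range τ, 0 < c j := by
    by_contra h
    push_neg at h
    have : ∑ i ∈ Finset.range τ, c i ≤ 0 := Finset.sum_nonpos h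
    linarith
  -- strict antitonicity
  have hanti : StrictAntiOn f (Set.Ioi (0 : ℝ)) := by
    intro x hx y hy hxy
    simp only [Set.mem_Ioi] at hx hy
    rw [hf' x, hf' y]
    apply mul_lt_mul_of_pos_left _ hβ
    apply Finset.sum_lt_sum
    · intro i _
      apply mul_le_mul_of_nonneg_left _ (hc0 i)
      apply inv_anti₀ (pow_pos hx _)
      exact pow_le_pow_left₀ hx.le hxy.le _
    · refine ⟨j, hjmem, ?_⟩
      apply mul_lt_mul_of_pos_left _ hjpos
      apply inv_strictAnti₀ (pow_pos hx _)
      exact pow_lt_pow_left₀ hxy hx.le (by omega)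
  refine ⟨hanti, ?_, ?_⟩
  · -- existence and uniqueness
    set a : ℝ := min 1 (R / 2) with hadef
    set b : ℝ := max 1 (2 * R) with hbdef
    have ha0 : 0 < a := lt_min one_pos (by linarith)
    have ha1 : a ≤ 1 := min_le_left _ _
    have hb1 : 1 ≤ b := le_max_left _ _
    have hab : a ≤ b := le_trans ha1 hb1
    have hfa : 2 ≤ f a := by
      have haR : a ≤ R / 2 := min_le_right _ _
      have h1 : ∀ i ∈ Finset.range τ, c i * a⁻¹ ≤ c i * (a ^ (d + 1 + i))⁻¹ := by
        intro i _
        apply mul_le_mul_of_nonneg_left _ (hc0 i)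
        apply inv_anti₀ (pow_pos ha0 _)
        exact pow_le_of_le_one ha0.le ha1 (by omega)
      have h2 : (∑ i ∈ Finset.range τ, c i) * a⁻¹ ≤ ∑ i ∈ Finset.range τ, c i * (a ^ (d + 1 + i))⁻¹ := by
        rw [Finset.sum_mul]
        exact Finset.sum_le_sum h1
      have h3 : R * a⁻¹ ≤ f a := by
        rw [hf', hR, mul_assoc]
        exact mul_le_mul_of_nonneg_left h2 hβ.le
      have h4 : (R / 2)⁻¹ ≤ a⁻¹ := inv_anti₀ ha0 haR
      have h5 : 2 ≤ R * a⁻¹ := by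
        have := mul_le_mul_of_nonneg_left h4 hRpos.le
        rw [show R * (R / 2)⁻¹ = 2 by field_simp] at this
        linarith
      linarith
    have hfb : f b ≤ 1 / 2 := by
      have hbR : 2 * R ≤ b := le_max_right _ _
      have h1 : ∀ i ∈ Finset.range τ, c i * (b ^ (d + 1 + i))⁻¹ ≤ c i * b⁻¹ := by
        intro i _
        apply mul_le_mul_of_nonneg_left _ (hc0 i)
        apply inv_anti₀ (by linarith)
        exact le_self_pow₀ (by linarith) (by omega)
      have h2 : ∑ i ∈ Finset.range τ, c i * (b ^ (d + 1 + i))⁻¹ ≤ (∑ i ∈ Finset.range τ, c i) * b⁻¹ := by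
        rw [Finset.sum_mul]
        exact Finset.sum_le_sum h1
      have h3 : f b ≤ R * b⁻¹ := by
        rw [hf', hR, mul_assoc]
        exact mul_le_mul_of_nonneg_left h2 hβ.le
      have h4 : b⁻¹ ≤ (2 * R)⁻¹ := inv_anti₀ (by linarith) hbR
      have h5 : R * b⁻¹ ≤ 1 / 2 := by
        have := mul_le_mul_of_nonneg_left h4 hRpos.le
        rw [show R * (2 * R)⁻¹ = 1 / 2 by field_simp] at this
        linarith
      linarith
    have hcont : ContinuousOn f (Set.Icc a b) := by
      have : ContinuousOn (fun r : ℝ => β * ∑ i ∈ Finset.range τ, c i * (r ^ (d + 1 + i))⁻¹)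
          (Set.Icc a b) := by
        apply ContinuousOn.mul continuousOn_const
        apply continuousOn_finset_sum
        intro i _
        apply ContinuousOn.mul continuousOn_const
        apply ContinuousOn.inv₀ ((continuousOn_pow _))
        intro x hx
        exact pow_ne_zero _ (by have := hx.1; intro h; rw [h] at this; linarith)
      exact this.congr (fun r _ => hf' r)
    have h1mem : (1 : ℝ) ∈ Set.Icc (f b) (f a) := ⟨by linarith, by linarith⟩
    obtain ⟨r, hrmem, hreq⟩ := intermediate_value_Icc' hab hcont h1mem
    have hr0 : 0 < r := lt_of_lt_of_le ha0 hrmem.1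
    refine ⟨r, ⟨hr0, hreq⟩, ?_⟩
    rintro s ⟨hs0, hseq⟩
    exact hanti.injOn (Set.mem_Ioi.mpr hs0) (Set.mem_Ioi.mpr hr0) (by rw [hseq, hreq])
  · intro r hr0 hreq
    have h1r : r < 1 → R < 1 := by
      intro h
      have := hanti (Set.mem_Ioi.mpr hr0) (Set.mem_Ioi.mpr one_pos) h
      rw [hf1, hreq] at this; exact this
    have h2r : 1 < r → 1 < R := by
      intro h
      have := hanti (Set.mem_Ioi.mpr one_pos) (Set.mem_Ioi.mpr hr0) h
      rw [hf1, hreq] at this; exact this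
    have h3r : r = 1 → R = 1 := by intro h; rw [← hreq, h, hf1]
    rcases lt_trichotomy r 1 with h | h | h
    · have hh := h1r h
      exact ⟨⟨fun h' => by linarith, fun h' => by linarith⟩,
        ⟨fun h' => by linarith, fun h' => by linarith⟩,
        ⟨fun h' => by linarith, fun h' => by linarith⟩⟩
    · have hh := h3r h
      exact ⟨⟨fun h' => by linarith, fun h' => by linarith⟩,
        ⟨fun h' => by linarith, fun h' => by linarith⟩,
        ⟨fun h' => by linarith, fun h' => by linarith⟩⟩
    · have hh := h2r h
      exact ⟨⟨fun h' => by linarith, fun h' => by linarith⟩,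
        ⟨fun h' => by linarith, fun h' => by linarith⟩,
        ⟨fun h' => by linarith, fun h' => by linarith⟩⟩
end

section
/- Comparison in the isolation-time control: let τ₁, τ₂ : ℕ → ℕ be control functions with 1 ≤ τ₁(t) ≤ τ₂(t) for every natural number t, and let x₁, x₂ : ℤ → ℝ satisfy, for every integer t ≥ 0 and j ∈ {1,2}, x_j(t+1) = β · Σ_{i=0}^{τ_j(t)-1} (1 − α·ω(i)) · x_j(t − d − i). If x₁(t) = x₂(t) and x₁(t) ≥ 0 for every integer t ≤ 0, then 0 ≤ x₁(t) ≤ x₂(t) for every integer t ≥ 0. -/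
/-- Comparison in the isolation-time control: a pointwise larger control `τ₂ ≥ τ₁`
yields a pointwise larger (nonnegative) solution. -/
theorem controlled_epidemic_comparison_in_tau
    (d : ℕ) (β α : ℝ) (hβ : 0 < β)
    (hα0 : 0 ≤ α) (hα1 : α ≤ 1)
    (ω : ℕ → ℝ) (hω : ∀ i, 0 ≤ ω i ∧ ω i ≤ 1)
    (τ₁ τ₂ : ℕ → ℕ) (hτ : ∀ t : ℕ, 1 ≤ τ₁ t ∧ τ₁ t ≤ τ₂ t)
    (x₁ x₂ : ℤ → ℝ)
    (hx₁ : ∀ t : ℤ, 0 ≤ t →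
      x₁ (t + 1) = β * ∑ i ∈ Finset.range (τ₁ t.toNat), (1 - α * ω i) * x₁ (t - d - i))
    (hx₂ : ∀ t : ℤ, 0 ≤ t →
      x₂ (t + 1) = β * ∑ i ∈ Finset.range (τ₂ t.toNat), (1 - α * ω i) * x₂ (t - d - i))
    (h0 : ∀ t : ℤ, t ≤ 0 → x₁ t = x₂ t ∧ 0 ≤ x₁ t) :
    ∀ t : ℤ, 0 ≤ t → 0 ≤ x₁ t ∧ x₁ t ≤ x₂ t := by
  have hc : ∀ i : ℕ, 0 ≤ 1 - α * ω i := by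
    intro i
    have h1 : α * ω i ≤ 1 * 1 :=
      mul_le_mul hα1 (hω i).2 (hω i).1 zero_le_one
    linarith
  have key : ∀ n : ℕ, 0 ≤ x₁ (n : ℤ) ∧ x₁ (n : ℤ) ≤ x₂ (n : ℤ) := by
    intro n
    induction n using Nat.strong_induction_on with
    | _ n ih =>
      match n with
      | 0 => exact ⟨(h0 0 le_rfl).2, le_of_eq (h0 0 le_rfl).1⟩
      | Nat.succ m =>
        -- previous values
        have H : ∀ s : ℤ, s ≤ (m : ℤ) → 0 ≤ x₁ s ∧ x₁ s ≤ x₂ s := by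
          intro s hs
          rcases le_or_gt s 0 with h | h
          · exact ⟨(h0 s h).2, le_of_eq (h0 s h).1⟩
          · obtain ⟨k, rfl⟩ := Int.eq_ofNat_of_zero_le h.le
            have hk : k < m + 1 := by exact_mod_cast Int.lt_add_one_of_le hs
            exact ih k hk
        have hm0 : (0 : ℤ) ≤ (m : ℤ) := Int.natCast_nonneg m
        have hcast : ((Nat.succ m : ℕ) : ℤ) = (m : ℤ) + 1 := by push_cast; ring
        have htoNat : ((m : ℤ)).toNat = m := Int.toNat_natCast m
        have e1 := hx₁ m hm0
        have e2 := hx₂ m hm0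
        rw [htoNat] at e1 e2
        have harg : ∀ i : ℕ, ((m : ℤ) - d - i) ≤ (m : ℤ) := by
          intro i
          have : (0:ℤ) ≤ (d : ℤ) + i := by positivity
          linarith
        have hx1nn : ∀ i ∈ Finset.range (τ₁ m), 0 ≤ (1 - α * ω i) * x₁ ((m : ℤ) - d - i) := by
          intro i _
          exact mul_nonneg (hc i) (H _ (harg i)).1
        have hx2nn : ∀ i : ℕ, 0 ≤ (1 - α * ω i) * x₂ ((m : ℤ) - d - i) := by
          intro i
          exact mul_nonneg (hc i) (le_trans (H _ (harg i)).1 (H _ (harg i)).2)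
        constructor
        · rw [hcast, e1]
          exact mul_nonneg hβ.le (Finset.sum_nonneg hx1nn)
        · rw [hcast, e1, e2]
          apply mul_le_mul_of_nonneg_left _ hβ.le
          calc ∑ i ∈ Finset.range (τ₁ m), (1 - α * ω i) * x₁ ((m : ℤ) - d - i)
              ≤ ∑ i ∈ Finset.range (τ₁ m), (1 - α * ω i) * x₂ ((m : ℤ) - d - i) := by
                apply Finset.sum_le_sum
                intro i _
                exact mul_le_mul_of_nonneg_left (H _ (harg i)).2 (hc i)
            _ ≤ ∑ i ∈ Finset.range (τ₂ m), (1 - α * ω i) * x₂ ((m : ℤ) - d - i) := by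
                apply Finset.sum_le_sum_of_subset_of_nonneg
                · exact Finset.range_subset_range.mpr (hτ m).2
                · intro i _ _; exact hx2nn i
  intro t ht
  obtain ⟨k, rfl⟩ := Int.eq_ofNat_of_zero_le ht
  exact key k
end

section
/- Comparison in the time-dependent control implies a bound on active infectious population: let τ : ℕ → ℕ be a control with 1 ≤ τ(t) ≤ τ_max for all t, let x : ℤ → ℝ satisfy the controlled epidemic recursion with control τ and nonnegative history, and let y : ℤ → ℝ satisfy the controlled epidemic recursion with the constant control τ_max and the same history. Then for every integer t ≥ 0 the active infectious populations satisfy 0 ≤ Σ_{i=0}^{τ(t)-1} (1 − α·ω(i)) · x(t − d − i) ≤ Σ_{i=0}^{τ_max-1} (1 − α·ω(i)) · y(t − d − i). -/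
/-- Comparison in the time-dependent control implies a bound on the active
infectious population. -/
theorem controlled_epidemic_active_population_bound
    (d : ℕ) (β α : ℝ) (hβ : 0 < β)
    (hα0 : 0 ≤ α) (hα1 : α ≤ 1)
    (ω : ℕ → ℝ) (hω : ∀ i, 0 ≤ ω i ∧ ω i ≤ 1)
    (τ : ℕ → ℕ) (τmax : ℕ) (hτ : ∀ t : ℕ, 1 ≤ τ t ∧ τ t ≤ τmax)
    (x y : ℤ → ℝ)
    (hx : ∀ t : ℤ, 0 ≤ t →
      x (t + 1) = β * ∑ i ∈ Finset.range (τ t.toNat), (1 - α * ω i) * x (t - d - i))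
    (hy : ∀ t : ℤ, 0 ≤ t →
      y (t + 1) = β * ∑ i ∈ Finset.range τmax, (1 - α * ω i) * y (t - d - i))
    (h0 : ∀ t : ℤ, t ≤ 0 → x t = y t ∧ 0 ≤ x t) :
    ∀ t : ℤ, 0 ≤ t →
      0 ≤ ∑ i ∈ Finset.range (τ t.toNat), (1 - α * ω i) * x (t - d - i) ∧
      ∑ i ∈ Finset.range (τ t.toNat), (1 - α * ω i) * x (t - d - i) ≤
        ∑ i ∈ Finset.range τmax, (1 - α * ω i) * y (t - d - i) := by
  have hc : ∀ i : ℕ, 0 ≤ 1 - α * ω i := by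
    intro i
    have h1 : α * ω i ≤ 1 * 1 := mul_le_mul hα1 (hω i).2 (hω i).1 zero_le_one
    linarith
  have key : ∀ n : ℕ, ∀ s : ℤ, s ≤ n → 0 ≤ x s ∧ x s ≤ y s := by
    intro n
    induction n using Nat.strong_induction_on with
    | _ n ih =>
      intro s hs
      by_cases h : s ≤ 0
      · obtain ⟨he, hn⟩ := h0 s h
        exact ⟨hn, le_of_eq he⟩
      · push_neg at h
        have hs1 : (1 : ℤ) ≤ s := h
        set u : ℤ := s - 1 with hu
        have hu0 : 0 ≤ u := by omega
        have hn1 : 1 ≤ n := by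
          by_contra hn
          interval_cases n <;> omega
        have hprev : ∀ i : ℕ, 0 ≤ x (u - d - i) ∧ x (u - d - i) ≤ y (u - d - i) := by
          intro i
          exact ih (n - 1) (by omega) _ (by omega)
        have hyn : ∀ i : ℕ, 0 ≤ y (u - d - i) := fun i =>
          le_trans (hprev i).1 (hprev i).2
        have hxs : x s = β * ∑ i ∈ Finset.range (τ u.toNat), (1 - α * ω i) * x (u - d - i) := by
          have := hx u hu0
          rw [show u + 1 = s by omega] at this
          exact this
        have hys : y s = β * ∑ i ∈ Finset.range τmax, (1 - α * ω i) * y (u - d - i) := by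
          have := hy u hu0
          rw [show u + 1 = s by omega] at this
          exact this
        have hsum0 : 0 ≤ ∑ i ∈ Finset.range (τ u.toNat), (1 - α * ω i) * x (u - d - i) :=
          Finset.sum_nonneg fun i _ => mul_nonneg (hc i) (hprev i).1
        constructor
        · rw [hxs]; exact mul_nonneg hβ.le hsum0
        · rw [hxs, hys]
          apply mul_le_mul_of_nonneg_left _ hβ.le
          calc ∑ i ∈ Finset.range (τ u.toNat), (1 - α * ω i) * x (u - d - i)
              ≤ ∑ i ∈ Finset.range (τ u.toNat), (1 - α * ω i) * y (u - d - i) :=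
                Finset.sum_le_sum fun i _ =>
                  mul_le_mul_of_nonneg_left (hprev i).2 (hc i)
            _ ≤ ∑ i ∈ Finset.range τmax, (1 - α * ω i) * y (u - d - i) :=
                Finset.sum_le_sum_of_subset_of_nonneg
                  (Finset.range_subset_range.2 (hτ u.toNat).2)
                  (fun i _ _ => mul_nonneg (hc i) (hyn i))
  intro t ht
  have hall : ∀ s : ℤ, 0 ≤ x s ∧ x s ≤ y s := by
    intro s
    rcases le_or_gt s 0 with h | h
    · obtain ⟨he, hn⟩ := h0 s h
      exact ⟨hn, le_of_eq he⟩
    · exact key s.toNat s (by omega)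
  have hyn : ∀ s : ℤ, 0 ≤ y s := fun s => le_trans (hall s).1 (hall s).2
  constructor
  · exact Finset.sum_nonneg fun i _ => mul_nonneg (hc i) (hall _).1
  · calc ∑ i ∈ Finset.range (τ t.toNat), (1 - α * ω i) * x (t - d - i)
        ≤ ∑ i ∈ Finset.range (τ t.toNat), (1 - α * ω i) * y (t - d - i) :=
          Finset.sum_le_sum fun i _ =>
            mul_le_mul_of_nonneg_left (hall _).2 (hc i)
      _ ≤ ∑ i ∈ Finset.range τmax, (1 - α * ω i) * y (t - d - i) :=
          Finset.sum_le_sum_of_subset_of_nonneg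
            (Finset.range_subset_range.2 (hτ t.toNat).2)
            (fun i _ _ => mul_nonneg (hc i) (hyn _))
end
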